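/- Let (R, m) be a complete local noetherian ring and M a finitely generated R-module. Let 𝒩 be a nonempty collection of submodules of M closed under finite intersections, and let N = ⋂_{N' ∈ 𝒩} N'. Then for every s ∈ ℕ there exists N' ∈ 𝒩 with N' ⊆ N + m^s M. -/
import Mathlib

open Submodule

universe u v

section Pi

variable {R : Type u} [CommRing R]

lemma chev_pi_coord_mem {n : ℕ} (J : Ideal R) {v : Fin n → R}
    (hv : v ∈ (J • ⊤ : Submodule R (Fin n → R))) (i : Fin n) :
    v i ∈ (J • ⊤ : Submodule R R) := by
  refine Submodule.smul_induction_on hv ?_ ?_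
  · intro r hr w _
    exact Submodule.smul_mem_smul hr trivial
  · intro a b ha hb
    exact add_mem ha hb

lemma chev_pi_single_mem {n : ℕ} (J : Ideal R) {y : R}
    (hy : y ∈ (J • ⊤ : Submodule R R)) (i : Fin n) :
    Pi.single i y ∈ (J • ⊤ : Submodule R (Fin n → R)) := by
  refine Submodule.smul_induction_on hy ?_ ?_
  · intro r hr w _
    have h : (Pi.single i (r • w) : Fin n → R) = r • (Pi.single i w : Fin n → R) := by
      ext j
      by_cases hj : j = i
      · subst hj; simp
      · simp [Pi.single_eq_of_ne hj]
    rw [h]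
    exact Submodule.smul_mem_smul hr trivial
  · intro a b ha hb
    have h : (Pi.single i (a + b) : Fin n → R) = Pi.single i a + Pi.single i b := by
      ext j
      by_cases hj : j = i
      · subst hj; simp
      · simp [Pi.single_eq_of_ne hj]
    rw [h]
    exact add_mem ha hb

lemma chev_pi_precomplete (J : Ideal R) [IsPrecomplete J R] (n : ℕ) :
    IsPrecomplete J (Fin n → R) := by
  constructor
  intro f hf
  have hcoord : ∀ i : Fin n, ∃ L : R, ∀ t, f t i ≡ L [SMOD (J ^ t • ⊤ : Submodule R R)] := by
    intro i
    refine IsPrecomplete.prec ‹IsPrecomplete J R› ?_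
    intro m k hmk
    exact SModEq.sub_mem.mpr (chev_pi_coord_mem _ (SModEq.sub_mem.mp (hf hmk)) i)
  choose L hL using hcoord
  refine ⟨L, fun t => SModEq.sub_mem.mpr ?_⟩
  have h : f t - L = ∑ i, Pi.single i ((f t - L) i) := (Finset.univ_sum_single (f t - L)).symm
  rw [h]
  exact Submodule.sum_mem _ fun i _ =>
    chev_pi_single_mem _ (SModEq.sub_mem.mp (hL i t)) i

/-- A Cauchy sequence in a finitely generated module over a precomplete ring has a limit. -/
lemma chev_fg_limit (J : Ideal R) [IsPrecomplete J R] (M : Type v) [AddCommGroup M] [Module R M]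
    [Module.Finite R M] (f : ℕ → M)
    (hf : ∀ m k : ℕ, m ≤ k → f m - f k ∈ (J ^ m • ⊤ : Submodule R M)) :
    ∃ L : M, ∀ t, f t - L ∈ (J ^ t • ⊤ : Submodule R M) := by
  obtain ⟨n, π, hπ⟩ := Module.Finite.exists_fin' R M
  have hmap : ∀ t : ℕ, Submodule.map π (J ^ t • ⊤ : Submodule R (Fin n → R))
      = (J ^ t • ⊤ : Submodule R M) := by
    intro t
    rw [Submodule.map_smul'', Submodule.map_top, LinearMap.range_eq_top.mpr hπ]
  have hd : ∀ t : ℕ, ∃ d : Fin n → R,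
      d ∈ (J ^ t • ⊤ : Submodule R (Fin n → R)) ∧ π d = f t - f (t + 1) := by
    intro t
    have h1 : f t - f (t + 1) ∈ (J ^ t • ⊤ : Submodule R M) := hf t (t + 1) (by omega)
    rw [← hmap t] at h1
    obtain ⟨d, hd1, hd2⟩ := h1
    exact ⟨d, hd1, hd2⟩
  choose d hd1 hd2 using hd
  obtain ⟨y0, hy0⟩ := hπ (f 0)
  set g : ℕ → (Fin n → R) := fun t => y0 - ∑ j ∈ Finset.range t, d j with hg
  have hπg : ∀ t, π (g t) = f t := by
    intro t
    induction t with
    | zero => simp [hg, hy0]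
    | succ t ih =>
      have : g (t + 1) = g t - d t := by
        simp [hg, Finset.sum_range_succ]; ring
      rw [this, map_sub, ih, hd2 t]
      abel
  have hgc : ∀ {m k : ℕ}, m ≤ k → g m ≡ g k [SMOD (J ^ m • ⊤ : Submodule R (Fin n → R))] := by
    intro m k hmk
    refine SModEq.sub_mem.mpr ?_
    have : g m - g k = ∑ j ∈ Finset.Ico m k, d j := by
      simp [hg]
      rw [← Finset.sum_range_add_sum_Ico _ hmk]
      abel
    rw [this]
    refine Submodule.sum_mem _ fun j hj => ?_
    have hj' : m ≤ j := (Finset.mem_Ico.mp hj).1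
    exact Submodule.smul_mono_left (Ideal.pow_le_pow_right hj') (hd1 j)
  haveI := chev_pi_precomplete J n
  obtain ⟨L', hL'⟩ := IsPrecomplete.prec ‹IsPrecomplete J (Fin n → R)› @hgc
  refine ⟨π L', fun t => ?_⟩
  have h1 : g t - L' ∈ (J ^ t • ⊤ : Submodule R (Fin n → R)) := SModEq.sub_mem.mp (hL' t)
  have h2 : π (g t - L') ∈ (J ^ t • ⊤ : Submodule R M) := by
    rw [← hmap t]; exact Submodule.mem_map_of_mem h1
  rw [map_sub, hπg t] at h2
  exact h2

end Pi

open Submodule IsLocalRing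

set_option synthInstance.maxHeartbeats 1000000


lemma chev_artinian_aux {R : Type u} [CommRing R] [IsNoetherianRing R] [IsLocalRing R] (s : ℕ) :
    ∀ (N : Type v) [AddCommGroup N] [Module R N] [Module.Finite R N],
      (maximalIdeal R ^ s • ⊤ : Submodule R N) = ⊥ → IsArtinian R N := by
  induction s with
  | zero =>
    intro N _ _ _ h
    rw [pow_zero, Ideal.one_eq_top, Submodule.top_smul] at h
    haveI : Subsingleton N := by
      constructor
      intro a b
      have ha : a ∈ (⊥ : Submodule R N) := h ▸ Submodule.mem_top
      have hb : b ∈ (⊥ : Submodule R N) := h ▸ Submodule.mem_top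
      rw [Submodule.mem_bot] at ha hb
      rw [ha, hb]
    exact isArtinian_of_finite
  | succ s ih =>
    intro N _ _ _ h
    haveI : Module.Finite R (maximalIdeal R • ⊤ : Submodule R N) :=
      Module.Finite.iff_fg.mpr (IsNoetherian.noetherian _)
    have hKbot : (maximalIdeal R ^ s • ⊤ :
        Submodule R (maximalIdeal R • ⊤ : Submodule R N)) = ⊥ := by
      apply Submodule.map_injective_of_injective
        (Submodule.injective_subtype (maximalIdeal R • ⊤ : Submodule R N))
      rw [Submodule.map_smul'', Submodule.map_top, Submodule.range_subtype, Submodule.map_bot,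
        smul_smul, ← pow_succ]
      exact h
    haveI hartK : IsArtinian R (maximalIdeal R • ⊤ : Submodule R N) := ih _ hKbot
    haveI : IsScalarTower R (R ⧸ maximalIdeal R)
        (N ⧸ (maximalIdeal R • ⊤ : Submodule R N)) := by
      constructor
      intro r q x
      obtain ⟨a, rfl⟩ := Ideal.Quotient.mk_surjective q
      obtain ⟨m, rfl⟩ := Submodule.Quotient.mk_surjective _ x
      show Ideal.Quotient.mk (maximalIdeal R) (r * a) • Submodule.Quotient.mk m = _
      rw [Module.Quotient.mk_smul_mk, Module.Quotient.mk_smul_mk, ← Submodule.Quotient.mk_smul,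
        smul_smul]
    haveI : Module.Finite (R ⧸ maximalIdeal R) (N ⧸ (maximalIdeal R • ⊤ : Submodule R N)) :=
      Module.Finite.of_restrictScalars_finite R _ _
    haveI : IsArtinianRing (R ⧸ maximalIdeal R) := by
      letI := Ideal.Quotient.field (maximalIdeal R)
      exact inferInstance
    have hartQbar : IsArtinian (R ⧸ maximalIdeal R) (N ⧸ (maximalIdeal R • ⊤ : Submodule R N)) :=
      isArtinian_of_fg_of_artinian' (R := R ⧸ maximalIdeal R)
        (M := N ⧸ (maximalIdeal R • ⊤ : Submodule R N))
    haveI hartQ : IsArtinian R (N ⧸ (maximalIdeal R • ⊤ : Submodule R N)) := by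
      set Q := N ⧸ (maximalIdeal R • ⊤ : Submodule R N) with hQ
      have hsmul : ∀ (a : R) (x : Q), Ideal.Quotient.mk (maximalIdeal R) a • x = a • x := by
        intro a x
        rw [← Ideal.Quotient.algebraMap_eq, algebraMap_smul]
      let g : Submodule R Q → Submodule (R ⧸ maximalIdeal R) Q := fun p =>
        { carrier := p
          add_mem' := fun h1 h2 => p.add_mem h1 h2
          zero_mem' := p.zero_mem
          smul_mem' := fun q x hx => by
            obtain ⟨a, rfl⟩ := Ideal.Quotient.mk_surjective q
            rw [hsmul a x]
            exact p.smul_mem a hx }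
      let emb : Submodule R Q ↪o Submodule (R ⧸ maximalIdeal R) Q :=
        { toFun := g
          inj' := by
            intro p q hpq
            apply SetLike.ext'
            have := congrArg SetLike.coe hpq
            exact this
          map_rel_iff' := Iff.rfl }
      exact (isArtinian_iff _ _).mpr (emb.wellFounded ((isArtinian_iff _ _).mp hartQbar))
    exact isArtinian_of_range_eq_ker
      (Submodule.subtype (maximalIdeal R • ⊤ : Submodule R N))
      (Submodule.mkQ (maximalIdeal R • ⊤ : Submodule R N))
      (by rw [Submodule.range_subtype, Submodule.ker_mkQ])

open Submodule IsLocalRing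

/-- Krull intersection theorem, universe-polymorphic version. -/
lemma chev_krull {R : Type*} [CommRing R] [IsNoetherianRing R] [IsLocalRing R]
    (M : Type*) [AddCommGroup M] [Module R M] [Module.Finite R M] :
    (⨅ k : ℕ, (maximalIdeal R ^ k • ⊤ : Submodule R M)) = ⊥ := by
  obtain ⟨n, π, hπ⟩ := Module.Finite.exists_fin' R M
  let e : ((Fin n → R) ⧸ LinearMap.ker π) ≃ₗ[R] M := LinearMap.quotKerEquivOfSurjective π hπ
  have hW : (⨅ k : ℕ, (maximalIdeal R ^ k • ⊤ :
      Submodule R ((Fin n → R) ⧸ LinearMap.ker π))) = ⊥ :=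
    Ideal.iInf_pow_smul_eq_bot_of_isLocalRing (maximalIdeal R)
      (Ideal.IsMaximal.ne_top (IsLocalRing.maximalIdeal.isMaximal R))
  rw [eq_bot_iff]
  intro x hx
  have hx' : e.symm x ∈ (⨅ k : ℕ, (maximalIdeal R ^ k • ⊤ :
      Submodule R ((Fin n → R) ⧸ LinearMap.ker π))) := by
    rw [Submodule.mem_iInf] at hx ⊢
    intro k
    have h1 := hx k
    have hmap : Submodule.map (e.symm : M →ₗ[R] ((Fin n → R) ⧸ LinearMap.ker π))
        (maximalIdeal R ^ k • ⊤ : Submodule R M)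
        = (maximalIdeal R ^ k • ⊤ : Submodule R ((Fin n → R) ⧸ LinearMap.ker π)) := by
      rw [Submodule.map_smul'', Submodule.map_top, LinearEquiv.range]
    rw [← hmap]
    exact ⟨x, h1, rfl⟩
  rw [hW, Submodule.mem_bot] at hx'
  have h2 := congrArg e hx'
  simpa using h2

/-- Chevalley's theorem for modules: let `(R, m)` be a complete local noetherian ring and `M`
a finitely generated `R`-module.  If `𝒩` is a nonempty collection of submodules of `M`
closed under finite intersections, with intersection `N`, then for every `s` there is
`N' ∈ 𝒩` with `N' ⊆ N + m^s M`. -/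
theorem stmt18 (R : Type*) [CommRing R] [IsNoetherianRing R] [IsLocalRing R]
    [IsAdicComplete (IsLocalRing.maximalIdeal R) R]
    (M : Type*) [AddCommGroup M] [Module R M] [Module.Finite R M]
    (𝒩 : Set (Submodule R M)) (hne : 𝒩.Nonempty)
    (hinter : ∀ N₁ ∈ 𝒩, ∀ N₂ ∈ 𝒩, N₁ ⊓ N₂ ∈ 𝒩) :
    ∀ s : ℕ, ∃ N' ∈ 𝒩,
      N' ≤ sInf 𝒩 ⊔ ((IsLocalRing.maximalIdeal R) ^ s • (⊤ : Submodule R M)) := by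
  classical
  intro s
  -- minimal elements modulo `m ^ t`
  have hmin : ∀ t : ℕ, ∃ P ∈ 𝒩, ∀ N' ∈ 𝒩,
      P ⊔ (maximalIdeal R ^ t • ⊤ : Submodule R M) ≤
        N' ⊔ (maximalIdeal R ^ t • ⊤ : Submodule R M) := by
    intro t
    set Q : Submodule R M := maximalIdeal R ^ t • ⊤ with hQ
    haveI : IsArtinian R (M ⧸ Q) := by
      refine chev_artinian_aux t (M ⧸ Q) ?_
      have h1 : (maximalIdeal R ^ t • ⊤ : Submodule R (M ⧸ Q)) = Submodule.map Q.mkQ Q := by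
        rw [hQ, Submodule.map_smul'', Submodule.map_top, Submodule.range_mkQ]
      rw [h1, eq_bot_iff]
      rintro x ⟨y, hy, rfl⟩
      simpa [Submodule.Quotient.mk_eq_zero] using hy
    obtain ⟨P0, hP0, hminP⟩ := IsArtinian.set_has_minimal
      ((fun N' => Submodule.map Q.mkQ N') '' 𝒩) (hne.image _)
    obtain ⟨P, hP, rfl⟩ := hP0
    refine ⟨P, hP, fun N' hN' => ?_⟩
    have h1 : Submodule.map Q.mkQ (P ⊓ N') ∈ (fun N' => Submodule.map Q.mkQ N') '' 𝒩 :=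
      ⟨P ⊓ N', hinter P hP N' hN', rfl⟩
    have h3 : Submodule.map Q.mkQ (P ⊓ N') ≤ Submodule.map Q.mkQ P :=
      Submodule.map_mono inf_le_left
    have h4 : Submodule.map Q.mkQ (P ⊓ N') = Submodule.map Q.mkQ P :=
      ((lt_or_eq_of_le h3).resolve_left (hminP _ h1))
    have h5 : Submodule.map Q.mkQ P ≤ Submodule.map Q.mkQ N' :=
      h4 ▸ Submodule.map_mono inf_le_right
    calc P ⊔ Q = Submodule.comap Q.mkQ (Submodule.map Q.mkQ P) := by
          rw [Submodule.comap_map_eq, Submodule.ker_mkQ]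
      _ ≤ Submodule.comap Q.mkQ (Submodule.map Q.mkQ N') := Submodule.comap_mono h5
      _ = N' ⊔ Q := by rw [Submodule.comap_map_eq, Submodule.ker_mkQ]
  choose c hc1 hc2 using hmin
  set F : ℕ → Submodule R M := fun t => c t ⊔ (maximalIdeal R ^ t • ⊤ : Submodule R M) with hF
  have hFanti : ∀ m n : ℕ, m ≤ n → F n ≤ F m := by
    have hstep : ∀ t, F (t + 1) ≤ F t := by
      intro t
      refine (hc2 (t + 1) (c t) (hc1 t)).trans ?_
      exact sup_le_sup_left (Submodule.smul_mono_left (Ideal.pow_le_pow_right (by omega))) _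
    intro m n hmn
    induction n with
    | zero => simpa [Nat.le_zero.mp hmn]
    | succ n ih =>
      rcases Nat.lt_or_ge m (n + 1) with h | h
      · exact (hstep n).trans (ih (by omega))
      · have : m = n + 1 := by omega
        subst this; exact le_rfl
  have hFstep : ∀ t, F t ≤ F (t + 1) ⊔ (maximalIdeal R ^ t • ⊤ : Submodule R M) := by
    intro t
    refine (hc2 t (c (t + 1)) (hc1 (t + 1))).trans ?_
    exact sup_le_sup_right le_sup_left _
  -- It suffices to prove `F s ≤ sInf 𝒩 ⊔ m ^ s • ⊤`.
  refine ⟨c s, hc1 s, fun x hx => ?_⟩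
  have hxF : x ∈ F s := Submodule.mem_sup_left hx
  clear hx
  -- build a Cauchy sequence
  have hstep' : ∀ (t : ℕ) (y : M), y ∈ F t →
      ∃ z, z ∈ F (t + 1) ∧ y - z ∈ (maximalIdeal R ^ t • ⊤ : Submodule R M) := by
    intro t y hy
    obtain ⟨a, ha, b, hb, hab⟩ := Submodule.mem_sup.mp (hFstep t hy)
    exact ⟨a, ha, by rw [← hab]; simpa using hb⟩
  choose! z hz1 hz2 using hstep'
  let f : ℕ → M := fun t => Nat.rec x (fun t y => z (s + t) y) t
  have hf1 : ∀ t, f t ∈ F (s + t) := by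
    intro t
    induction t with
    | zero => exact hxF
    | succ t ih => exact hz1 _ _ ih
  have hf2 : ∀ t, f t - f (t + 1) ∈ (maximalIdeal R ^ (s + t) • ⊤ : Submodule R M) :=
    fun t => hz2 _ _ (hf1 t)
  have hcauchy : ∀ a b : ℕ, f a - f (a + b) ∈ (maximalIdeal R ^ (s + a) • ⊤ : Submodule R M) := by
    intro a b
    induction b with
    | zero => simpa using Submodule.zero_mem _
    | succ b ih =>
      have h1 : f a - f (a + (b + 1)) = (f a - f (a + b)) + (f (a + b) - f (a + b + 1)) := by
        rw [show a + (b + 1) = a + b + 1 from rfl]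
        abel
      rw [h1]
      refine Submodule.add_mem _ ih ?_
      exact Submodule.smul_mono_left (Ideal.pow_le_pow_right (by omega)) (hf2 (a + b))
  -- shift the sequence
  set g : ℕ → M := fun t => f (t - s) with hg
  have hgc : ∀ m k : ℕ, m ≤ k → g m - g k ∈ (maximalIdeal R ^ m • ⊤ : Submodule R M) := by
    intro m k hmk
    have h1 : (m - s) + ((k - s) - (m - s)) = k - s := by omega
    have h2 := hcauchy (m - s) ((k - s) - (m - s))
    rw [h1] at h2
    exact Submodule.smul_mono_left (Ideal.pow_le_pow_right (by omega)) h2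
  obtain ⟨L, hL⟩ := chev_fg_limit (maximalIdeal R) M g hgc
  -- `L` is in all members of `𝒩`
  have hLF : ∀ u : ℕ, L ∈ F u := by
    intro u
    have h1 : g (s + u) ∈ F u := by
      have heq : g (s + u) = f u := by
        show f (s + u - s) = f u
        rw [Nat.add_sub_cancel_left]
      rw [heq]
      exact hFanti u (s + u) (Nat.le_add_left u s) (hf1 u)
    have h2 : g (s + u) - L ∈ F u := by
      refine Submodule.mem_sup_right ?_
      exact Submodule.smul_mono_left (Ideal.pow_le_pow_right (by omega)) (hL (s + u))
    simpa using Submodule.sub_mem _ h1 h2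
  have hLN : L ∈ sInf 𝒩 := by
    rw [Submodule.mem_sInf]
    intro N' hN'
    -- Krull intersection in `M ⧸ N'`
    have hKrull : (⨅ u : ℕ, (maximalIdeal R ^ u • ⊤ : Submodule R (M ⧸ N'))) = ⊥ :=
      chev_krull (M ⧸ N')
    have hmem : N'.mkQ L ∈ (⨅ u : ℕ, (maximalIdeal R ^ u • ⊤ : Submodule R (M ⧸ N'))) := by
      rw [Submodule.mem_iInf]
      intro u
      have h1 : L ∈ N' ⊔ (maximalIdeal R ^ u • ⊤ : Submodule R M) :=
        hc2 u N' hN' (hLF u)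
      obtain ⟨a, ha, b, hb, hab⟩ := Submodule.mem_sup.mp h1
      have h2 : N'.mkQ L = N'.mkQ b := by
        rw [← hab]
        simp [Submodule.Quotient.mk_eq_zero, ha, Submodule.mkQ_apply,
          ← Submodule.Quotient.mk_add]
        rw [show Submodule.Quotient.mk (a + b) = Submodule.Quotient.mk a +
          Submodule.Quotient.mk b from rfl]
        simp [(Submodule.Quotient.mk_eq_zero N').mpr ha]
      rw [h2]
      have h3 : N'.mkQ b ∈ Submodule.map N'.mkQ (maximalIdeal R ^ u • ⊤ : Submodule R M) :=
        Submodule.mem_map_of_mem hb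
      rwa [Submodule.map_smul'', Submodule.map_top, Submodule.range_mkQ] at h3
    rw [hKrull, Submodule.mem_bot] at hmem
    rwa [Submodule.mkQ_apply, Submodule.Quotient.mk_eq_zero] at hmem
  have hxL : x - L ∈ (maximalIdeal R ^ s • ⊤ : Submodule R M) := by
    have h1 : g s = x := by
      show f (s - s) = x
      rw [Nat.sub_self]
      rfl
    have := hL s
    rwa [h1] at this
  have : x = L + (x - L) := by abel
  rw [this]
  exact Submodule.add_mem _ (Submodule.mem_sup_left hLN) (Submodule.mem_sup_right hxL)
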